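/- Let m ≥ 1, let U ⊆ ℝ^m be open, let S : U → (m×m real matrices) be continuously differentiable with S(x)ᵀ = −S(x) for every x ∈ U, and let Y, Z : U → ℝ^m be continuously differentiable vector fields. Define the 2-form σ_x(u,v) := ⟨u, S(x)v⟩. Assume: (a) Y is Hamiltonian, i.e. there exists a differentiable f : U → ℝ with S(x)·Y(x) = ∇f(x) for all x ∈ U (equivalently, the 1-form i_Yσ : v ↦ σ_x(Y(x),v) equals −df); (b) Z is a symmetry of σ, i.e. for all x ∈ U and all u, v ∈ ℝ^m: ⟨u, (DS(x)[Z(x)])v⟩ + ⟨DZ(x)u, S(x)v⟩ + ⟨u, S(x)(DZ(x)v)⟩ = 0, where DS(x)[Z(x)] is the directional derivative of S at x along Z(x) and DZ(x) is the Jacobian matrix of Z at x. Define g(x) := ⟨Y(x), S(x)Z(x)⟩ (= σ_x(Y(x),Z(x))) and the Lie bracket [Y,Z](x) := DZ(x)·Y(x) − DY(x)·Z(x). Then g is differentiable and S(x)·[Y,Z](x) = ∇g(x) for every x ∈ U; in particular [Y,Z] is a Hamiltonian vector field for σ with Hamiltonian function σ(Y,Z). -/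

import Mathlib

open Matrix

section Aux

variable {m : ℕ}

private lemma dot_diffAt {a b : (Fin m → ℝ) → (Fin m → ℝ)} {x : Fin m → ℝ}
    (ha : ∀ i, DifferentiableAt ℝ (fun y => a y i) x)
    (hb : ∀ i, DifferentiableAt ℝ (fun y => b y i) x) :
    DifferentiableAt ℝ (fun y => a y ⬝ᵥ b y) x := by
  simp only [dotProduct]
  exact DifferentiableAt.fun_sum fun i _ => (ha i).mul (hb i)

private lemma fderiv_dot {a b : (Fin m → ℝ) → (Fin m → ℝ)} {x : Fin m → ℝ}
    (ha : ∀ i, DifferentiableAt ℝ (fun y => a y i) x)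
    (hb : ∀ i, DifferentiableAt ℝ (fun y => b y i) x) (u : Fin m → ℝ) :
    fderiv ℝ (fun y => a y ⬝ᵥ b y) x u
      = (fun i => fderiv ℝ (fun y => a y i) x u) ⬝ᵥ b x
        + a x ⬝ᵥ (fun i => fderiv ℝ (fun y => b y i) x u) := by
  simp only [dotProduct]
  rw [fderiv_fun_sum (fun i _ => (ha i).fun_mul (hb i))]
  simp only [ContinuousLinearMap.coe_sum', Finset.sum_apply]
  rw [← Finset.sum_add_distrib]
  refine Finset.sum_congr rfl fun i _ => ?_
  rw [fderiv_fun_mul (ha i) (hb i)]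
  simp only [ContinuousLinearMap.add_apply, ContinuousLinearMap.coe_smul',
    Pi.smul_apply, smul_eq_mul]
  ring

end Aux

/-- coordinate form of the paper's Lemma 1.  On an open set `U ⊆ ℝ^m`, let
`S` be a `C¹` field of skew-symmetric matrices representing the 2-form
`σ_x(u,v) = ⟨u, S(x)v⟩`, and let `Y, Z` be `C¹` vector fields.  If `Y` is Hamiltonian with
Hamiltonian `f` (i.e. `S·Y = ∇f` on `U`) and `Z` is a symmetry of `σ` (i.e. `L_Z σ = 0` in
coordinates), then `g(x) := ⟨Y(x), S(x)Z(x)⟩` is differentiable on `U` and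
`S·[Y,Z] = ∇g` on `U`, where `[Y,Z] = DZ·Y − DY·Z`. -/
theorem statement1 (m : ℕ) (hm : 1 ≤ m) (U : Set (Fin m → ℝ)) (hU : IsOpen U)
    (S : (Fin m → ℝ) → Matrix (Fin m) (Fin m) ℝ)
    (hS : ∀ i j : Fin m, ContDiffOn ℝ 1 (fun x => S x i j) U)
    (hskew : ∀ x ∈ U, (S x)ᵀ = -(S x))
    (Y Z : (Fin m → ℝ) → (Fin m → ℝ))
    (hY : ContDiffOn ℝ 1 Y U) (hZ : ContDiffOn ℝ 1 Z U)
    -- (a) `Y` is Hamiltonian with Hamiltonian `f`: `S(x)·Y(x) = ∇f(x)` on `U`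
    (f : (Fin m → ℝ) → ℝ) (hf : DifferentiableOn ℝ f U)
    (hHam : ∀ x ∈ U, (S x).mulVec (Y x) = fun i => fderiv ℝ f x (Pi.single i 1))
    -- (b) `Z` is a symmetry of `σ`:
    (hsym : ∀ x ∈ U, ∀ u v : Fin m → ℝ,
      u ⬝ᵥ (Matrix.of fun i j => fderiv ℝ (fun y => S y i j) x (Z x)).mulVec v
        + (fderiv ℝ Z x u) ⬝ᵥ (S x).mulVec v
        + u ⬝ᵥ (S x).mulVec (fderiv ℝ Z x v) = 0) :
    DifferentiableOn ℝ (fun x => Y x ⬝ᵥ (S x).mulVec (Z x)) U ∧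
    ∀ x ∈ U,
      (S x).mulVec (fderiv ℝ Z x (Y x) - fderiv ℝ Y x (Z x)) =
        fun i => fderiv ℝ (fun x => Y x ⬝ᵥ (S x).mulVec (Z x)) x (Pi.single i 1) := by
  -- differentiability of all the pieces at points of `U`
  have hSij : ∀ x ∈ U, ∀ i j, DifferentiableAt ℝ (fun y => S y i j) x := fun x hx i j =>
    (((hS i j).differentiableOn one_ne_zero) x hx).differentiableAt (hU.mem_nhds hx)
  have hYi : ∀ x ∈ U, ∀ i, DifferentiableAt ℝ (fun y => Y y i) x := fun x hx i =>
    differentiableAt_pi.1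
      (((hY.differentiableOn one_ne_zero) x hx).differentiableAt (hU.mem_nhds hx)) i
  have hZi : ∀ x ∈ U, ∀ i, DifferentiableAt ℝ (fun y => Z y i) x := fun x hx i =>
    differentiableAt_pi.1
      (((hZ.differentiableOn one_ne_zero) x hx).differentiableAt (hU.mem_nhds hx)) i
  -- components of `S·v` type functions are differentiable
  have hSZ : ∀ x ∈ U, ∀ k, DifferentiableAt ℝ (fun y => (S y).mulVec (Z y) k) x := by
    intro x hx k
    have : (fun y => (S y).mulVec (Z y) k) = fun y => (fun j => S y k j) ⬝ᵥ Z y := rfl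
    rw [this]
    exact dot_diffAt (fun j => hSij x hx k j) (hZi x hx)
  have hSY : ∀ x ∈ U, ∀ k, DifferentiableAt ℝ (fun y => (S y).mulVec (Y y) k) x := by
    intro x hx k
    have : (fun y => (S y).mulVec (Y y) k) = fun y => (fun j => S y k j) ⬝ᵥ Y y := rfl
    rw [this]
    exact dot_diffAt (fun j => hSij x hx k j) (hYi x hx)
  have hgdiff : ∀ x ∈ U, DifferentiableAt ℝ (fun y => Y y ⬝ᵥ (S y).mulVec (Z y)) x :=
    fun x hx => dot_diffAt (hYi x hx) (hSZ x hx)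
  refine ⟨fun x hx => (hgdiff x hx).differentiableWithinAt, ?_⟩
  intro x hx
  have hxU : U ∈ nhds x := hU.mem_nhds hx
  -- componentwise fderiv of Y, Z
  have hYcomp : ∀ c : Fin m → ℝ, ∀ i, fderiv ℝ Y x c i = fderiv ℝ (fun y => Y y i) x c := by
    intro c i
    have : fderiv ℝ Y x = ContinuousLinearMap.pi fun i => fderiv ℝ (fun y => Y y i) x :=
      fderiv_pi (hYi x hx)
    rw [this]; rfl
  have hZcomp : ∀ c : Fin m → ℝ, ∀ i, fderiv ℝ Z x c i = fderiv ℝ (fun y => Z y i) x c := by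
    intro c i
    have : fderiv ℝ Z x = ContinuousLinearMap.pi fun i => fderiv ℝ (fun y => Z y i) x :=
      fderiv_pi (hZi x hx)
    rw [this]; rfl
  -- skew-symmetry of `S x`, pointwise
  have hsk : ∀ i j, S x j i = - S x i j := by
    intro i j
    have := congrFun (congrFun (hskew x hx) i) j
    simpa [Matrix.transpose_apply, Matrix.neg_apply] using this
  -- skew pairing for `S x`
  have hskpair : ∀ u v : Fin m → ℝ, u ⬝ᵥ (S x).mulVec v = - (v ⬝ᵥ (S x).mulVec u) := by
    intro u v
    simp only [dotProduct, Matrix.mulVec, Finset.mul_sum, ← Finset.sum_neg_distrib]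
    rw [Finset.sum_comm]
    refine Finset.sum_congr rfl fun i _ => Finset.sum_congr rfl fun j _ => ?_
    rw [hsk i j]; ring
  -- skew-symmetry of the derivative of `S`
  have hDSskew : ∀ i j, fderiv ℝ (fun y => S y j i) x = - fderiv ℝ (fun y => S y i j) x := by
    intro i j
    have hev : (fun y => S y j i) =ᶠ[nhds x] fun y => - S y i j := by
      filter_upwards [hxU] with y hy
      have := congrFun (congrFun (hskew y hy) i) j
      simpa [Matrix.transpose_apply, Matrix.neg_apply] using this
    rw [hev.fderiv_eq, fderiv_fun_neg]
  -- skew pairing for `DS[w]`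
  have hDSpair : ∀ w u v : Fin m → ℝ,
      u ⬝ᵥ (Matrix.of fun i j => fderiv ℝ (fun y => S y i j) x w).mulVec v
        = - (v ⬝ᵥ (Matrix.of fun i j => fderiv ℝ (fun y => S y i j) x w).mulVec u) := by
    intro w u v
    simp only [dotProduct, Matrix.mulVec, Matrix.of_apply, Finset.mul_sum,
      ← Finset.sum_neg_distrib]
    rw [Finset.sum_comm]
    refine Finset.sum_congr rfl fun i _ => Finset.sum_congr rfl fun j _ => ?_
    rw [hDSskew i j]
    simp only [ContinuousLinearMap.neg_apply]
    ring
  -- derivative of `y ↦ (S y).mulVec (c y)` componentwise, for c = Y and c = Z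
  have hDmulVec : ∀ (c : (Fin m → ℝ) → (Fin m → ℝ)),
      (∀ i, DifferentiableAt ℝ (fun y => c y i) x) →
      ∀ u : Fin m → ℝ, (fun k => fderiv ℝ (fun y => (S y).mulVec (c y) k) x u)
        = (Matrix.of fun i j => fderiv ℝ (fun y => S y i j) x u).mulVec (c x)
          + (S x).mulVec (fun i => fderiv ℝ (fun y => c y i) x u) := by
    intro c hc u
    funext k
    have hrw : (fun y => (S y).mulVec (c y) k) = fun y => (fun j => S y k j) ⬝ᵥ c y := rfl
    rw [hrw, fderiv_dot (fun j => hSij x hx k j) hc]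
    rfl
  -- the derivative of g
  set g := fun y => Y y ⬝ᵥ (S y).mulVec (Z y) with hg
  have hDg : ∀ u : Fin m → ℝ, fderiv ℝ g x u
      = (fderiv ℝ Y x u) ⬝ᵥ (S x).mulVec (Z x)
        + Y x ⬝ᵥ (Matrix.of fun i j => fderiv ℝ (fun y => S y i j) x u).mulVec (Z x)
        + Y x ⬝ᵥ (S x).mulVec (fderiv ℝ Z x u) := by
    intro u
    rw [hg, fderiv_dot (hYi x hx) (hSZ x hx) u, hDmulVec Z (hZi x hx) u, dotProduct_add]
    have h1 : (fun i => fderiv ℝ (fun y => Y y i) x u) = fderiv ℝ Y x u := by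
      funext i; rw [hYcomp u i]
    have h2 : (fun i => fderiv ℝ (fun y => Z y i) x u) = fderiv ℝ Z x u := by
      funext i; rw [hZcomp u i]
    rw [h1, h2]; ring
  -- Hessian symmetry: the Jacobian of h := S·Y is symmetric
  set h := fun y => (S y).mulVec (Y y) with hh
  have hHess : ∀ v w : Fin m → ℝ,
      w ⬝ᵥ ((Matrix.of fun i j => fderiv ℝ (fun y => S y i j) x v).mulVec (Y x)
            + (S x).mulVec (fderiv ℝ Y x v))
      = v ⬝ᵥ ((Matrix.of fun i j => fderiv ℝ (fun y => S y i j) x w).mulVec (Y x)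
            + (S x).mulVec (fderiv ℝ Y x w)) := by
    -- build the derivative of f as a function of the base point
    set f' : (Fin m → ℝ) → ((Fin m → ℝ) →L[ℝ] ℝ) :=
      fun y => ∑ i, h y i • (ContinuousLinearMap.proj i :
        (Fin m → ℝ) →L[ℝ] ℝ) with hf'
    have hf'apply : ∀ y u, f' y u = h y ⬝ᵥ u := by
      intro y u
      simp [hf', dotProduct, ContinuousLinearMap.sum_apply]
    have hAy : ∀ y ∈ U, HasFDerivAt f (f' y) y := by
      intro y hy
      have hdy : DifferentiableAt ℝ f y := (hf y hy).differentiableAt (hU.mem_nhds hy)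
      have : f' y = fderiv ℝ f y := by
        refine ContinuousLinearMap.ext fun u => ?_
        rw [hf'apply]
        have hu : u = ∑ i, u i • (Pi.single i 1 : Fin m → ℝ) := by
          funext j
          simp [Finset.sum_apply, Pi.single_apply, Finset.sum_ite_eq',
            Finset.mem_univ, mul_comm]
        conv_rhs => rw [hu]
        rw [map_sum]
        simp only [_root_.map_smul, smul_eq_mul]
        have hcomp : ∀ i, fderiv ℝ f y (Pi.single i 1) = h y i := by
          intro i
          show _ = (S y *ᵥ Y y) i
          rw [hHam y hy]
        simp only [hcomp, dotProduct]
        refine Finset.sum_congr rfl fun i _ => mul_comm _ _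
      rw [this]
      exact hdy.hasFDerivAt
    have hf'diff : DifferentiableAt ℝ f' x := by
      rw [hf']
      exact DifferentiableAt.fun_sum fun i _ => (hSY x hx i).smul_const _
    have hsymm2 := second_derivative_symmetric_of_eventually
      (f' := f') (f'' := fderiv ℝ f' x)
      (Filter.eventually_of_mem hxU hAy) hf'diff.hasFDerivAt
    -- translate f'' into derivatives of h
    have heval : ∀ w v : Fin m → ℝ, fderiv ℝ f' x v w
        = (fun k => fderiv ℝ (fun y => h y k) x v) ⬝ᵥ w := by
      intro w v
      have h1 : fderiv ℝ (fun y => f' y w) x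
          = (fderiv ℝ f' x).flip w := by
        have := fderiv_clm_apply (c := f') (u := fun _ => w) hf'diff
          (differentiableAt_const w)
        simpa using this
      have hhk : ∀ k, DifferentiableAt ℝ (fun y => h y k) x := by
        intro k; rw [hh]; exact hSY x hx k
      have h3 : fderiv ℝ (fun y => h y ⬝ᵥ w) x v
          = (fun k => fderiv ℝ (fun y => h y k) x v) ⬝ᵥ w
            + h x ⬝ᵥ (fun k => fderiv ℝ (fun _ : Fin m → ℝ => w k) x v) :=
        fderiv_dot (a := h) (b := fun _ => w) hhk (fun i => differentiableAt_const _) v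
      have h5 : (fun k => fderiv ℝ (fun _ : Fin m → ℝ => w k) x v) = fun _ => (0 : ℝ) := by
        funext k; simp
      rw [h5] at h3
      have h7 : h x ⬝ᵥ (fun _ => (0 : ℝ)) = 0 := by simp [dotProduct]
      rw [h7, add_zero] at h3
      have h2 : (fun y => f' y w) = fun y => h y ⬝ᵥ w := by
        funext y; rw [hf'apply]
      have h6 : fderiv ℝ f' x v w = fderiv ℝ (fun y => f' y w) x v := by
        rw [h1]; rfl
      rw [h6, h2, h3]
    intro v w
    have key : (fun k => fderiv ℝ (fun y => h y k) x v) ⬝ᵥ w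
        = (fun k => fderiv ℝ (fun y => h y k) x w) ⬝ᵥ v := by
      rw [← heval w v, ← heval v w]
      exact hsymm2 v w
    have hDh : ∀ u : Fin m → ℝ, (fun k => fderiv ℝ (fun y => h y k) x u)
        = (Matrix.of fun i j => fderiv ℝ (fun y => S y i j) x u).mulVec (Y x)
          + (S x).mulVec (fderiv ℝ Y x u) := by
      intro u
      have h1 : (fun i => fderiv ℝ (fun y => Y y i) x u) = fderiv ℝ Y x u := by
        funext i; rw [hYcomp u i]
      rw [hh]
      rw [hDmulVec Y (hYi x hx) u, h1]
    rw [hDh v, hDh w] at key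
    rw [dotProduct_comm w, dotProduct_comm v]
    exact key
  -- now the final computation
  funext i
  set u : Fin m → ℝ := Pi.single i 1 with hu
  have hgoal : ∀ c : Fin m → ℝ, (S x).mulVec c i = u ⬝ᵥ (S x).mulVec c := by
    intro c
    rw [hu, single_dotProduct, one_mul]
  have hLHS : (S x).mulVec (fderiv ℝ Z x (Y x) - fderiv ℝ Y x (Z x)) i
      = u ⬝ᵥ (S x).mulVec (fderiv ℝ Z x (Y x)) - u ⬝ᵥ (S x).mulVec (fderiv ℝ Y x (Z x)) := by
    rw [Matrix.mulVec_sub, Pi.sub_apply, hgoal, hgoal]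
  rw [hLHS, hDg u]
  -- abbreviations
  have hsym1 := hsym x hx (Y x) u
  have hHess1 := hHess u (Z x)
  -- unfold the pairings
  have e1 : (fderiv ℝ Z x (Y x)) ⬝ᵥ (S x).mulVec u = - (u ⬝ᵥ (S x).mulVec (fderiv ℝ Z x (Y x))) := by
    rw [hskpair]
  have e2 : u ⬝ᵥ (S x).mulVec (fderiv ℝ Y x (Z x))
      = - ((fderiv ℝ Y x (Z x)) ⬝ᵥ (S x).mulVec u) := by
    rw [hskpair]
  have e3 : Z x ⬝ᵥ (Matrix.of fun i j => fderiv ℝ (fun y => S y i j) x u).mulVec (Y x)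
      = - (Y x ⬝ᵥ (Matrix.of fun i j => fderiv ℝ (fun y => S y i j) x u).mulVec (Z x)) := by
    rw [hDSpair]
  have e4 : u ⬝ᵥ (Matrix.of fun i j => fderiv ℝ (fun y => S y i j) x (Z x)).mulVec (Y x)
      = - (Y x ⬝ᵥ (Matrix.of fun i j => fderiv ℝ (fun y => S y i j) x (Z x)).mulVec u) := by
    rw [hDSpair]
  have e5 : Z x ⬝ᵥ (S x).mulVec (fderiv ℝ Y x u)
      = - ((fderiv ℝ Y x u) ⬝ᵥ (S x).mulVec (Z x)) := by
    rw [hskpair]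
  have e6 : u ⬝ᵥ (S x).mulVec (fderiv ℝ Y x (Z x))
      = - ((fderiv ℝ Y x (Z x)) ⬝ᵥ (S x).mulVec u) := by
    rw [hskpair]
  rw [dotProduct_add] at hHess1
  rw [dotProduct_add] at hHess1
  -- hsym1 : Y⬝DS[Z]u + DZ(Y)⬝Su + Y⬝S(DZ u) = 0
  -- hHess1 : Z⬝(DS[u]Y) + Z⬝(S DY(u)) = u⬝(DS[Z]Y) + u⬝(S DY(Z))
  rw [e3, e5] at hHess1
  rw [e4] at hHess1
  rw [e1] at hsym1
  linarith [hHess1, hsym1, e2]
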